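/- Let (W,F) be a nonzero filtered vector space, V ⊆ W a nonzero subspace equipped with the induced filtration, and ε = 1 − rank(V)/rank(W). Then for every bounded Borel function h on ℝ, |∫ h dν_W − ∫ h dν_V| ≤ 2ε·‖h‖_sup. -/

import Mathlib

open Module MeasureTheory Set Filter

/-- Auxiliary: a left-continuous antitone family of submodules of a finite-dimensional
space is locally constant to the left. -/
lemma stmt1_aux_const {K W : Type*} [Field K] [AddCommGroup W] [Module K W]
    [FiniteDimensional K W] (F : ℝ → Submodule K W) (hF_anti : Antitone F)
    (hF_leftcont : ∀ t : ℝ, F t = ⨅ (s : ℝ) (_ : s < t), F s) (t : ℝ) :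
    ∃ s < t, ∀ s', s ≤ s' → s' ≤ t → F s' = F t := by
  set S : Set ℕ := {n | ∃ s < t, finrank K (F s) = n} with hS
  have hSne : S.Nonempty := ⟨finrank K (F (t - 1)), t - 1, by linarith, rfl⟩
  obtain ⟨s₀, hs₀lt, hs₀⟩ : sInf S ∈ S := Nat.sInf_mem hSne
  have hkey : F s₀ = F t := by
    have h1 : F t ≤ F s₀ := by
      rw [hF_leftcont t]
      exact iInf_le_of_le s₀ (iInf_le _ hs₀lt)
    have h2 : F s₀ ≤ F t := by
      rw [hF_leftcont t]
      refine le_iInf₂ fun s hs => ?_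
      rcases le_or_gt s s₀ with hc | hc
      · exact hF_anti hc
      · have hle : F s ≤ F s₀ := hF_anti hc.le
        have hrank : finrank K (F s₀) ≤ finrank K (F s) := by
          rw [hs₀]; exact Nat.sInf_le ⟨s, hs, rfl⟩
        exact (Submodule.eq_of_le_of_finrank_le hle hrank).ge
    exact le_antisymm h2 h1
  refine ⟨s₀, hs₀lt, fun s' h1 h2 => le_antisymm ?_ ?_⟩
  · rw [← hkey]; exact hF_anti h1
  · exact hF_anti h2

/-- Let `(W, F)` be a nonzero filtered vector space, `V ⊆ W` a
nonzero subspace with the induced filtration, and `ε = 1 - rank V / rank W`.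
Then for every bounded Borel function `h` on `ℝ`,
`|∫ h dν_W - ∫ h dν_V| ≤ 2 ε ‖h‖_sup`. -/
theorem stmt1 {K W : Type*} [Field K] [AddCommGroup W] [Module K W]
    [FiniteDimensional K W] [Nontrivial W]
    (F : ℝ → Submodule K W)
    (hF_anti : Antitone F)
    (hF_bot : ∃ t₀ : ℝ, ∀ t ≥ t₀, F t = ⊥)
    (hF_top : ∃ t₁ : ℝ, ∀ t ≤ t₁, F t = ⊤)
    (hF_leftcont : ∀ t : ℝ, F t = ⨅ (s : ℝ) (_ : s < t), F s)
    (V : Submodule K W) (hV : V ≠ ⊥)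
    (ε : ℝ) (hε : ε = 1 - (finrank K V : ℝ) / finrank K W)
    (νW νV : Measure ℝ)
    (hνW : IsProbabilityMeasure νW)
    (hνWchar : ∀ t : ℝ, (νW (Ici t)).toReal = (finrank K (F t) : ℝ) / finrank K W)
    (hνV : IsProbabilityMeasure νV)
    (hνVchar : ∀ t : ℝ, (νV (Ici t)).toReal
      = (finrank K ↥(F t ⊓ V) : ℝ) / finrank K V)
    (h : ℝ → ℝ) (hmeas : Measurable h) (C : ℝ) (hbound : ∀ x, |h x| ≤ C) :
    |(∫ x, h x ∂νW) - ∫ x, h x ∂νV| ≤ 2 * ε * C := by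
  obtain ⟨t₀, ht₀⟩ := hF_bot
  obtain ⟨t₁, ht₁⟩ := hF_top
  have hdW : (0 : ℝ) < finrank K W := by
    have := finrank_pos (R := K) (M := W)
    exact_mod_cast this
  have hdV : (0 : ℝ) < finrank K V := by
    haveI : Nontrivial V := Submodule.nontrivial_iff_ne_bot.mpr hV
    have : 0 < finrank K V := finrank_pos
    exact_mod_cast this
  have hVW : (finrank K V : ℝ) ≤ finrank K W := by
    exact_mod_cast Submodule.finrank_le V
  -- the key dimension comparison
  have hkey : ∀ s t : ℝ, s ≤ t →
      finrank K (F t) + finrank K ↥(F s ⊓ V) ≤ finrank K (F s) + finrank K ↥(F t ⊓ V) := by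
    intro s t hst
    have hFts : F t ≤ F s := hF_anti hst
    have hsup : F t ⊔ (F s ⊓ V) ≤ F s := sup_le hFts inf_le_left
    have hinf : F t ⊓ (F s ⊓ V) = F t ⊓ V := by
      rw [← inf_assoc, inf_eq_left.mpr hFts]
    have heq := Submodule.finrank_sup_add_finrank_inf_eq (F t) (F s ⊓ V)
    rw [hinf] at heq
    have hle : finrank K ↥(F t ⊔ (F s ⊓ V)) ≤ finrank K (F s) :=
      Submodule.finrank_mono hsup
    omega
  have hIle : ∀ t : ℝ, finrank K ↥(F t ⊓ V) ≤ finrank K (F t) :=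
    fun t => Submodule.finrank_mono inf_le_left
  -- the Stieltjes function
  set G : Submodule K W → ℝ :=
    fun p => ((finrank K p : ℝ) - finrank K ↥(p ⊓ V)) / finrank K W with hG
  set g : ℝ → ℝ := fun u => G (F (-u)) with hg
  have hgmono : Monotone g := by
    intro u u' huu'
    have := hkey (-u') (-u) (by linarith)
    have h' : ((finrank K (F (-u)) : ℝ) - finrank K ↥(F (-u) ⊓ V))
        ≤ (finrank K (F (-u')) : ℝ) - finrank K ↥(F (-u') ⊓ V) := by
      have hc : ((finrank K (F (-u)) : ℝ) + finrank K ↥(F (-u') ⊓ V))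
          ≤ (finrank K (F (-u')) : ℝ) + finrank K ↥(F (-u) ⊓ V) := by exact_mod_cast this
      linarith
    exact div_le_div_of_nonneg_right h' hdW.le
  have hgrc : ∀ u : ℝ, ContinuousWithinAt g (Ici u) u := by
    intro u
    obtain ⟨s₀, hs₀lt, hs₀⟩ := stmt1_aux_const F hF_anti hF_leftcont (-u)
    have hev : ∀ᶠ u' in nhdsWithin u (Ici u), g u' = g u := by
      have hmem : Ico u (-s₀) ∈ nhdsWithin u (Ici u) := by
        rw [← Ici_inter_Iio]
        exact inter_mem_nhdsWithin _ (Iio_mem_nhds (by linarith))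
      filter_upwards [hmem] with u' hu'
      have hFF : F (-u') = F (-u) := hs₀ (-u') (by linarith [hu'.2]) (by linarith [hu'.1])
      exact congrArg G hFF
    refine Filter.Tendsto.congr' ?_ (tendsto_const_nhds (x := g u))
    filter_upwards [hev] with x hx
    exact hx.symm
  set f : StieltjesFunction ℝ := ⟨g, hgmono, hgrc⟩ with hf
  have hfbot : Tendsto f atBot (nhds 0) := by
    refine Tendsto.congr' ?_ (tendsto_const_nhds (α := ℝ))
    filter_upwards [eventually_le_atBot (-t₀)] with u hu
    have hb : F (-u) = ⊥ := ht₀ (-u) (by linarith)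
    show (0 : ℝ) = G (F (-u))
    have h3 : finrank K ↥((⊥ : Submodule K W) ⊓ V) = 0 := by
      rw [bot_inf_eq]; exact finrank_bot K W
    rw [hb, hG]
    simp [h3]
  have hεeq : ε = ((finrank K W : ℝ) - finrank K V) / finrank K W := by
    rw [hε]; field_simp
  have hftop : Tendsto f atTop (nhds ε) := by
    refine Tendsto.congr' ?_ (tendsto_const_nhds (α := ℝ))
    filter_upwards [eventually_ge_atTop (-t₁)] with u hu
    have hb : F (-u) = ⊤ := ht₁ (-u) (by linarith)
    show ε = G (F (-u))
    have h2 : finrank K ↥((⊤ : Submodule K W) ⊓ V) = finrank K V := by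
      rw [top_inf_eq]
    rw [hb, hG, hεeq]
    simp only [h2, finrank_top]
  set ρ : Measure ℝ := f.measure.map Neg.neg with hρ
  have hρIci : ∀ t : ℝ, ρ (Ici t)
      = ENNReal.ofReal (((finrank K (F t) : ℝ) - finrank K ↥(F t ⊓ V)) / finrank K W) := by
    intro t
    rw [hρ, Measure.map_apply measurable_neg measurableSet_Ici]
    have hpre : Neg.neg ⁻¹' Ici t = Iic (-t) := by
      ext x; simp [le_neg]
    rw [hpre, f.measure_Iic hfbot (-t), sub_zero]
    show ENNReal.ofReal (G (F (- -t))) = _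
    rw [neg_neg, hG]
  have hρuniv : ρ univ = ENNReal.ofReal ε := by
    rw [hρ, Measure.map_apply measurable_neg MeasurableSet.univ, preimage_univ,
      f.measure_univ hfbot hftop, sub_zero]
  have hρfin : IsFiniteMeasure ρ := by
    constructor; rw [hρuniv]; exact ENNReal.ofReal_lt_top
  set c : ℝ := (finrank K V : ℝ) / finrank K W with hc
  have hc0 : 0 ≤ c := by positivity
  have hε0 : 0 ≤ ε := by
    rw [hε]
    have : (finrank K V : ℝ) / finrank K W ≤ 1 := by
      rw [div_le_one hdW]; exact hVW
    linarith
  -- the measure identity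
  have hid : νW = (ENNReal.ofReal c) • νV + ρ := by
    refine Measure.ext_of_Ici νW _ (fun a => ?_)
    have hW : νW (Ici a) = ENNReal.ofReal ((finrank K (F a) : ℝ) / finrank K W) := by
      rw [← hνWchar a, ENNReal.ofReal_toReal (measure_ne_top νW _)]
    have hVa : νV (Ici a) = ENNReal.ofReal ((finrank K ↥(F a ⊓ V) : ℝ) / finrank K V) := by
      rw [← hνVchar a, ENNReal.ofReal_toReal (measure_ne_top νV _)]
    rw [hW, Measure.add_apply, Measure.smul_apply, smul_eq_mul, hVa, hρIci a,
      ← ENNReal.ofReal_mul hc0, ← ENNReal.ofReal_add (by positivity) (by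
        have hcast : (finrank K ↥(F a ⊓ V) : ℝ) ≤ finrank K (F a) := by exact_mod_cast hIle a
        exact div_nonneg (by linarith) hdW.le)]
    congr 1
    have h1 : (finrank K V : ℝ) ≠ 0 := hdV.ne'
    have h2 : (finrank K W : ℝ) ≠ 0 := hdW.ne'
    rw [hc]
    field_simp
    ring
  -- integrability
  have hint : ∀ (μ : Measure ℝ), IsFiniteMeasure μ → Integrable h μ := by
    intro μ hμ
    refine (integrable_const C).mono' hmeas.aestronglyMeasurable ?_
    filter_upwards with x
    simpa [Real.norm_eq_abs] using hbound x
  have hintV : Integrable h νV := hint νV inferInstance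
  have hintρ : Integrable h ρ := hint ρ hρfin
  have hsplit : (∫ x, h x ∂νW) = c * (∫ x, h x ∂νV) + ∫ x, h x ∂ρ := by
    rw [hid, integral_add_measure (hintV.smul_measure ENNReal.ofReal_ne_top) hintρ,
      integral_smul_measure, ENNReal.toReal_ofReal hc0, smul_eq_mul]
  have hC0 : 0 ≤ C := le_trans (abs_nonneg _) (hbound 0)
  have hA : |∫ x, h x ∂νV| ≤ C := by
    have := norm_integral_le_of_norm_le_const (μ := νV) (f := h) (C := C)
      (by filter_upwards with x; simpa [Real.norm_eq_abs] using hbound x)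
    simpa [Real.norm_eq_abs, measure_univ] using this
  have hB : |∫ x, h x ∂ρ| ≤ ε * C := by
    have := norm_integral_le_of_norm_le_const (μ := ρ) (f := h) (C := C)
      (by filter_upwards with x; simpa [Real.norm_eq_abs] using hbound x)
    rw [measureReal_def, hρuniv, ENNReal.toReal_ofReal hε0] at this
    rw [Real.norm_eq_abs] at this
    linarith [this]
  have hc1 : 1 - c = ε := by rw [hε, hc]
  calc |(∫ x, h x ∂νW) - ∫ x, h x ∂νV|
      = |(c - 1) * (∫ x, h x ∂νV) + ∫ x, h x ∂ρ| := by rw [hsplit]; ring_nf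
    _ ≤ |(c - 1) * (∫ x, h x ∂νV)| + |∫ x, h x ∂ρ| := abs_add_le _ _
    _ = (1 - c) * |∫ x, h x ∂νV| + |∫ x, h x ∂ρ| := by
        rw [abs_mul, abs_of_nonpos (by linarith [hc1] : c - 1 ≤ 0)]; ring_nf
    _ ≤ ε * C + ε * C := by
        refine add_le_add ?_ hB
        rw [hc1]
        exact mul_le_mul_of_nonneg_left hA hε0
    _ = 2 * ε * C := by ring
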